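/- Let r ∈ [0, 1/2] and let (X_i)_{i≥1} be i.i.d. random variables with P(X_i = 1) = P(X_i = −1) = r and P(X_i = 0) = 1 − 2r; set S_0 = 0, S_n = X_1 + ⋯ + X_n and M_n = max_{0 ≤ i ≤ n} S_i. Then for every n, P(M_n > 0 and S_n ≤ 0) = P(S_n ≥ 2). -/

import Mathlib

open MeasureTheory ProbabilityTheory
open scoped ENNReal

open scoped Classical

namespace LazyAux

variable {n : ℕ}

/-- Extend a finite vector of steps to `ℕ` by zero. -/
def ext (n : ℕ) (x : Fin n → ℤ) (j : ℕ) : ℤ := if h : j < n then x ⟨j, h⟩ else 0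

/-- Partial sums of the extended step sequence. -/
def ps (n : ℕ) (x : Fin n → ℤ) (k : ℕ) : ℤ := ∑ j ∈ Finset.range k, ext n x j

lemma ps_zero (x : Fin n → ℤ) : ps n x 0 = 0 := by simp [ps]

lemma ps_succ (x : Fin n → ℤ) (k : ℕ) : ps n x (k + 1) = ps n x k + ext n x k :=
  Finset.sum_range_succ _ _

/-- All steps lie in `{-1, 0, 1}`. -/
def IsE (n : ℕ) (x : Fin n → ℤ) : Prop := ∀ i : Fin n, x i = 1 ∨ x i = 0 ∨ x i = -1

lemma ext_le_one {x : Fin n → ℤ} (hx : IsE n x) (j : ℕ) : ext n x j ≤ 1 := by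
  unfold ext
  split
  · rcases hx ⟨j, ‹_›⟩ with h | h | h <;> rw [h] <;> norm_num
  · norm_num

/-- Discrete intermediate value theorem: if the walk gets above `0` it hits `1`. -/
lemma ivt {x : Fin n → ℤ} (hx : IsE n x) {m : ℕ} (hm : 1 ≤ ps n x m) :
    ∃ k, ps n x k = 1 ∧ k ≤ m := by
  have hP : ∃ k, 1 ≤ ps n x k := ⟨m, hm⟩
  have hts : 1 ≤ ps n x (Nat.find hP) := Nat.find_spec hP
  have htm : Nat.find hP ≤ m := Nat.find_le hm
  have ht0 : Nat.find hP ≠ 0 := by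
    intro h
    rw [h, ps_zero] at hts
    omega
  obtain ⟨u, hu⟩ := Nat.exists_eq_succ_of_ne_zero ht0
  have hless : ¬ 1 ≤ ps n x u := Nat.find_min hP (by omega)
  have h1 := ps_succ x u
  have h2 := ext_le_one hx u
  rw [hu, Nat.succ_eq_add_one] at hts
  rw [hu] at htm
  exact ⟨u + 1, by omega, by omega⟩

/-- The walk hits level `1` at some time `≤ n`. -/
def hit (n : ℕ) (x : Fin n → ℤ) : Prop := ∃ k, ps n x k = 1 ∧ k ≤ n

/-- The reflection map: flip all steps from the first hitting time of `1` onwards. -/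
noncomputable def Φ (n : ℕ) (x : Fin n → ℤ) : Fin n → ℤ :=
  if h : hit n x then (fun i => if (i : ℕ) < Nat.find h then x i else -(x i)) else x

lemma phi_apply (x : Fin n → ℤ) (h : hit n x) (i : Fin n) :
    Φ n x i = if (i : ℕ) < Nat.find h then x i else -(x i) := by
  unfold Φ
  rw [dif_pos h]

lemma phi_neg (x : Fin n → ℤ) (h : ¬ hit n x) : Φ n x = x := dif_neg h

lemma ext_phi (x : Fin n → ℤ) (h : hit n x) (j : ℕ) :
    ext n (Φ n x) j = if j < Nat.find h then ext n x j else -(ext n x j) := by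
  have hτn : Nat.find h ≤ n := (Nat.find_spec h).2
  by_cases hj : j < n
  · unfold ext
    rw [dif_pos hj, dif_pos hj, phi_apply x h]
  · have h1 : ¬ j < Nat.find h := by omega
    simp only [ext, dif_neg hj, if_neg h1, neg_zero]

lemma ps_phi_le (x : Fin n → ℤ) (h : hit n x) {k : ℕ} (hk : k ≤ Nat.find h) :
    ps n (Φ n x) k = ps n x k := by
  unfold ps
  refine Finset.sum_congr rfl fun j hj => ?_
  rw [Finset.mem_range] at hj
  rw [ext_phi x h j, if_pos (by omega)]

lemma ps_phi_ge (x : Fin n → ℤ) (h : hit n x) {k : ℕ} (hk : Nat.find h ≤ k) :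
    ps n (Φ n x) k = 2 - ps n x k := by
  have hspec := (Nat.find_spec h).1
  have h1 : ps n (Φ n x) k
      = ∑ j ∈ Finset.range k, ((if j < Nat.find h then 2 * ext n x j else 0) - ext n x j) := by
    show ∑ j ∈ Finset.range k, ext n (Φ n x) j = _
    refine Finset.sum_congr rfl fun j _ => ?_
    rw [ext_phi x h j]
    by_cases hj : j < Nat.find h
    · simp only [if_pos hj]; ring
    · simp only [if_neg hj]; ring
  rw [h1, Finset.sum_sub_distrib]
  have h2 : ∑ j ∈ Finset.range k, (if j < Nat.find h then 2 * ext n x j else 0)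
      = ∑ j ∈ Finset.range (Nat.find h), (if j < Nat.find h then 2 * ext n x j else 0) := by
    refine (Finset.sum_subset (by intro j hj; simp only [Finset.mem_range] at hj ⊢; omega) ?_).symm
    intro j _ hj
    rw [Finset.mem_range, not_lt] at hj
    rw [if_neg (by omega)]
  rw [h2]
  have h3 : ∑ j ∈ Finset.range (Nat.find h), (if j < Nat.find h then 2 * ext n x j else 0)
      = 2 * ps n x (Nat.find h) := by
    rw [ps, Finset.mul_sum]
    refine Finset.sum_congr rfl fun j hj => ?_
    rw [Finset.mem_range] at hj
    rw [if_pos hj]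
  rw [h3, hspec]
  show (2 : ℤ) * 1 - ps n x k = 2 - ps n x k
  ring

lemma hit_phi (x : Fin n → ℤ) (h : hit n x) : hit n (Φ n x) :=
  ⟨Nat.find h, by rw [ps_phi_le x h le_rfl]; exact (Nat.find_spec h).1, (Nat.find_spec h).2⟩

lemma find_phi (x : Fin n → ℤ) (h : hit n x) (h2 : hit n (Φ n x)) :
    Nat.find h2 = Nat.find h := by
  apply (Nat.find_eq_iff h2).mpr
  refine ⟨⟨by rw [ps_phi_le x h le_rfl]; exact (Nat.find_spec h).1, (Nat.find_spec h).2⟩, ?_⟩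
  intro k hk hc
  exact Nat.find_min h hk ⟨by rw [ps_phi_le x h hk.le] at hc; exact hc.1, hc.2⟩

lemma phi_phi (x : Fin n → ℤ) : Φ n (Φ n x) = x := by
  by_cases h : hit n x
  · have h2 := hit_phi x h
    funext i
    rw [phi_apply _ h2, find_phi x h h2, phi_apply _ h]
    by_cases hi : (i : ℕ) < Nat.find h <;> simp [hi]
  · have h2 : ¬ hit n (Φ n x) := by rw [phi_neg x h]; exact h
    rw [phi_neg _ h2, phi_neg x h]

lemma isE_phi {x : Fin n → ℤ} (hx : IsE n x) : IsE n (Φ n x) := by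
  intro i
  by_cases h : hit n x
  · rw [phi_apply x h i]
    split
    · exact hx i
    · rcases hx i with h1 | h1 | h1 <;> rw [h1] <;> norm_num
  · rw [phi_neg x h]; exact hx i

/-- The event "maximum positive and endpoint nonpositive". -/
def Qa (n : ℕ) (x : Fin n → ℤ) : Prop := (∃ k ≤ n, 0 < ps n x k) ∧ ps n x n ≤ 0

/-- The event "endpoint at least 2". -/
def Qb (n : ℕ) (x : Fin n → ℤ) : Prop := 2 ≤ ps n x n

lemma forwardAB {x : Fin n → ℤ} (hx : IsE n x) (hA : Qa n x) : Qb n (Φ n x) := by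
  obtain ⟨⟨m, hmn, hms⟩, hend⟩ := hA
  obtain ⟨k, hk1, hkm⟩ := ivt hx (show 1 ≤ ps n x m by omega)
  have h : hit n x := ⟨k, hk1, le_trans hkm hmn⟩
  have hτ : Nat.find h ≤ n := (Nat.find_spec h).2
  have := ps_phi_ge x h hτ
  unfold Qb
  omega

lemma backAB {x : Fin n → ℤ} (hx : IsE n x) (hB : Qb n x) : Qa n (Φ n x) := by
  unfold Qb at hB
  obtain ⟨k, hk1, hkn⟩ := ivt hx (show 1 ≤ ps n x n by omega)
  have h : hit n x := ⟨k, hk1, hkn⟩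
  have hτ : Nat.find h ≤ n := (Nat.find_spec h).2
  refine ⟨⟨Nat.find h, hτ, ?_⟩, ?_⟩
  · rw [ps_phi_le x h le_rfl, (Nat.find_spec h).1]; norm_num
  · rw [ps_phi_ge x h hτ]; omega

lemma qa_phi_iff_qb {x : Fin n → ℤ} (hx : IsE n x) : Qa n (Φ n x) ↔ Qb n x := by
  constructor
  · intro h
    have := forwardAB (isE_phi hx) h
    rwa [phi_phi x] at this
  · exact backAB hx

end LazyAux

/-- For the lazy symmetric random walk `S` with i.i.d. steps taking values
`±1` with probability `r` each and `0` with probability `1 − 2r`, with running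
maximum `M_n = max_{0 ≤ i ≤ n} S_i`, one has
`P(M_n > 0 and S_n ≤ 0) = P(S_n ≥ 2)` (the reflection identity). -/
theorem lazy_walk_reflection
    (Ω : Type*) [MeasureSpace Ω] [IsProbabilityMeasure (ℙ : Measure Ω)]
    (r : ℝ) (hr : 0 ≤ r ∧ r ≤ 1 / 2)
    (X : ℕ → Ω → ℤ) (hmeas : ∀ i, Measurable (X i))
    (hindep : iIndepFun X ℙ)
    (hp1 : ∀ i, ℙ {ω | X i ω = 1} = ENNReal.ofReal r)
    (hm1 : ∀ i, ℙ {ω | X i ω = -1} = ENNReal.ofReal r)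
    (h0 : ∀ i, ℙ {ω | X i ω = 0} = ENNReal.ofReal (1 - 2 * r))
    (S : ℕ → Ω → ℤ) (hS : ∀ n ω, S n ω = ∑ i ∈ Finset.range n, X i ω)
    (M : ℕ → Ω → ℤ)
    (hM : ∀ n ω, M n ω = (Finset.range (n + 1)).sup'
      (Finset.nonempty_range_iff.mpr (Nat.succ_ne_zero n)) (fun i => S i ω))
    (n : ℕ) :
    ℙ {ω | 0 < M n ω ∧ S n ω ≤ 0} = ℙ {ω | 2 ≤ S n ω} := by
  classical
  set p : (Fin n → ℤ) → ℝ≥0∞ := fun x => ∏ i : Fin n, ℙ {ω | X (i : ℕ) ω = x i} with hp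
  have hsingle : ∀ (i : ℕ) (a : ℤ), MeasurableSet {ω | X i ω = a} := fun i a =>
    hmeas i (measurableSet_singleton a)
  -- the three values exhaust the probability
  have hdisj10 : ∀ i : ℕ, Disjoint {ω | X i ω = 1} {ω | X i ω = -1} := by
    intro i
    rw [Set.disjoint_left]
    rintro ω h1 h2
    simp only [Set.mem_setOf_eq] at h1 h2
    omega
  have hdisj2 : ∀ i : ℕ, Disjoint ({ω | X i ω = 1} ∪ {ω | X i ω = -1}) {ω | X i ω = 0} := by
    intro i
    rw [Set.disjoint_left]
    rintro ω h1 h2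
    simp only [Set.mem_union, Set.mem_setOf_eq] at h1 h2
    omega
  have htot : ∀ i : ℕ, ℙ ({ω | X i ω = 1} ∪ {ω | X i ω = -1} ∪ {ω | X i ω = 0}) = 1 := by
    intro i
    rw [measure_union (hdisj2 i) (hsingle i 0), measure_union (hdisj10 i) (hsingle i (-1)),
      hp1 i, hm1 i, h0 i, ← ENNReal.ofReal_add hr.1 hr.1,
      ← ENNReal.ofReal_add (by linarith [hr.1]) (by linarith [hr.2]),
      show r + r + (1 - 2 * r) = 1 by ring, ENNReal.ofReal_one]
  have hnull : ∀ (i : ℕ) (a : ℤ), a ≠ 1 → a ≠ -1 → a ≠ 0 → ℙ {ω | X i ω = a} = 0 := by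
    intro i a h1 h2 h3
    have hm' : MeasurableSet ({ω | X i ω = 1} ∪ {ω | X i ω = -1} ∪ {ω | X i ω = 0}) :=
      ((hsingle i 1).union (hsingle i (-1))).union (hsingle i 0)
    have hc : ℙ ({ω | X i ω = 1} ∪ {ω | X i ω = -1} ∪ {ω | X i ω = 0})ᶜ = 0 := by
      rw [measure_compl hm' (measure_ne_top _ _), htot i, measure_univ, tsub_self]
    refine le_antisymm (le_trans (measure_mono ?_) hc.le) zero_le
    intro ω hω
    simp only [Set.mem_setOf_eq] at hω
    simp only [Set.mem_compl_iff, Set.mem_union, Set.mem_setOf_eq, hω]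
    push_neg
    exact ⟨⟨h1, h2⟩, h3⟩
  have hsym : ∀ (i : ℕ) (a : ℤ), ℙ {ω | X i ω = -a} = ℙ {ω | X i ω = a} := by
    intro i a
    by_cases h1 : a = 1
    · subst h1; rw [hp1 i, hm1 i]
    by_cases h2 : a = -1
    · subst h2; simp only [neg_neg]; rw [hp1 i, hm1 i]
    by_cases h3 : a = 0
    · subst h3; rw [neg_zero]
    · rw [hnull i a h1 h2 h3, hnull i (-a) (by omega) (by omega) (by omega)]
  -- cylinder probabilities
  have hcyl : ∀ x : Fin n → ℤ, ℙ {ω | ∀ i : Fin n, X (i : ℕ) ω = x i} = p x := by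
    intro x
    have h1 := (iIndepFun_iff_measure_inter_preimage_eq_mul.mp hindep) (Finset.range n)
      (sets := fun j => {LazyAux.ext n x j}) (fun j _ => measurableSet_singleton _)
    have h2 : (⋂ j ∈ Finset.range n, X j ⁻¹' {LazyAux.ext n x j})
        = {ω | ∀ i : Fin n, X (i : ℕ) ω = x i} := by
      ext ω
      simp only [Set.mem_iInter, Finset.mem_range, Set.mem_preimage, Set.mem_singleton_iff,
        Set.mem_setOf_eq]
      constructor
      · intro hω i
        have := hω (i : ℕ) i.isLt
        rw [LazyAux.ext, dif_pos i.isLt] at this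
        simpa using this
      · intro hω j hj
        rw [LazyAux.ext, dif_pos hj]
        exact hω ⟨j, hj⟩
    rw [h2] at h1
    rw [h1, hp, ← Fin.prod_univ_eq_prod_range (fun j => ℙ (X j ⁻¹' {LazyAux.ext n x j})) n]
    refine Finset.prod_congr rfl fun i _ => ?_
    have he : LazyAux.ext n x (i : ℕ) = x i := by
      rw [LazyAux.ext, dif_pos i.isLt]
    congr 1
    ext ω
    simp [he]
  -- decomposition of an event over cylinder sets
  have hdecomp : ∀ Q : (Fin n → ℤ) → Prop,
      ℙ {ω | Q (fun i : Fin n => X (i : ℕ) ω)} = ∑' x : Fin n → ℤ, if Q x then p x else 0 := by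
    intro Q
    have hmc : ∀ x : Fin n → ℤ, MeasurableSet {ω | ∀ i : Fin n, X (i : ℕ) ω = x i} := by
      intro x
      have h2 : {ω | ∀ i : Fin n, X (i : ℕ) ω = x i}
          = ⋂ i : Fin n, {ω | X (i : ℕ) ω = x i} := by
        ext ω; simp
      rw [h2]
      exact MeasurableSet.iInter fun i => hsingle i (x i)
    have hU : {ω | Q (fun i : Fin n => X (i : ℕ) ω)}
        = ⋃ x : Fin n → ℤ, if Q x then {ω | ∀ i : Fin n, X (i : ℕ) ω = x i} else ∅ := by
      ext ω
      simp only [Set.mem_setOf_eq, Set.mem_iUnion]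
      constructor
      · intro h
        refine ⟨fun i => X (i : ℕ) ω, ?_⟩
        rw [if_pos h]
        exact fun i => rfl
      · rintro ⟨x, hx⟩
        by_cases hQ : Q x
        · rw [if_pos hQ] at hx
          have hfx : (fun i : Fin n => X (i : ℕ) ω) = x := funext hx
          rwa [hfx]
        · rw [if_neg hQ] at hx
          exact absurd hx (Set.notMem_empty ω)
    rw [hU, measure_iUnion ?_ ?_]
    · refine tsum_congr fun x => ?_
      by_cases hQ : Q x
      · rw [if_pos hQ, if_pos hQ, hcyl x]
      · rw [if_neg hQ, if_neg hQ, measure_empty]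
    · intro x y hxy
      simp only [Function.onFun]
      by_cases hQx : Q x
      · by_cases hQy : Q y
        · rw [if_pos hQx, if_pos hQy, Set.disjoint_left]
          intro ω hx1 hy1
          exact hxy (funext fun i => ((hx1 i).symm.trans (hy1 i)))
        · rw [if_neg hQy]; exact Set.disjoint_empty _
      · rw [if_neg hQx]; exact Set.empty_disjoint _
    · intro x
      by_cases hQ : Q x
      · rw [if_pos hQ]; exact hmc x
      · rw [if_neg hQ]; exact MeasurableSet.empty
  -- identify the walk with the combinatorial partial sums
  have hps : ∀ (ω : Ω) (k : ℕ), k ≤ n →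
      S k ω = LazyAux.ps n (fun i : Fin n => X (i : ℕ) ω) k := by
    intro ω k hk
    rw [hS, LazyAux.ps]
    refine Finset.sum_congr rfl fun j hj => ?_
    rw [Finset.mem_range] at hj
    rw [LazyAux.ext, dif_pos (show j < n by omega)]
  have hAset : {ω | 0 < M n ω ∧ S n ω ≤ 0}
      = {ω | LazyAux.Qa n (fun i : Fin n => X (i : ℕ) ω)} := by
    ext ω
    simp only [Set.mem_setOf_eq, hM n ω, Finset.lt_sup'_iff, Finset.mem_range, Nat.lt_succ_iff]
    unfold LazyAux.Qa
    rw [← hps ω n le_rfl]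
    constructor
    · rintro ⟨⟨k, hk, h0k⟩, hend⟩
      exact ⟨⟨k, hk, by rw [← hps ω k hk]; exact h0k⟩, hend⟩
    · rintro ⟨⟨k, hk, h0k⟩, hend⟩
      exact ⟨⟨k, hk, by rw [hps ω k hk]; exact h0k⟩, hend⟩
  have hBset : {ω | 2 ≤ S n ω} = {ω | LazyAux.Qb n (fun i : Fin n => X (i : ℕ) ω)} := by
    ext ω
    simp only [Set.mem_setOf_eq]
    rw [LazyAux.Qb, ← hps ω n le_rfl]
  -- invariance of the cylinder weight under the reflection
  have hpinv : ∀ x : Fin n → ℤ, p (LazyAux.Φ n x) = p x := by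
    intro x
    by_cases h : LazyAux.hit n x
    · refine Finset.prod_congr rfl fun i _ => ?_
      rw [LazyAux.phi_apply x h i]
      split
      · rfl
      · exact hsym i (x i)
    · rw [LazyAux.phi_neg x h]
  have hp0 : ∀ x : Fin n → ℤ, ¬ LazyAux.IsE n x → p x = 0 := by
    intro x hx
    rw [LazyAux.IsE] at hx
    push_neg at hx
    obtain ⟨i, hi⟩ := hx
    exact Finset.prod_eq_zero (Finset.mem_univ i) (hnull i (x i) hi.1 hi.2.2 hi.2.1)
  -- put everything together
  rw [hAset, hBset, hdecomp (LazyAux.Qa n), hdecomp (LazyAux.Qb n)]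
  have hEq : (∑' x : Fin n → ℤ, if LazyAux.Qa n x then p x else 0)
      = ∑' x : Fin n → ℤ, if LazyAux.Qa n (LazyAux.Φ n x) then p (LazyAux.Φ n x) else 0 :=
    (Equiv.tsum_eq (Function.Involutive.toPerm _ (fun x => LazyAux.phi_phi x))
      (fun x => if LazyAux.Qa n x then p x else 0)).symm
  rw [hEq]
  refine tsum_congr fun x => ?_
  rw [hpinv x]
  by_cases hE : LazyAux.IsE n x
  · rw [if_congr (LazyAux.qa_phi_iff_qb hE) rfl rfl]
  · rw [hp0 x hE]
    simp
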